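/- In the free group F₂ = ⟨a, b⟩, define θ on generators by θ(a) = ξ₁⁺ξ₂⁻, θ(a⁻¹) = ξ₂⁺ξ₁⁻, θ(b) = ξ₂⁺ξ₃⁻, θ(b⁻¹) = ξ₃⁺ξ₂⁻ (words in the six letters ξᵢ^±, where ξᵢ⁺ and ξᵢ⁻ are regarded as inverse to each other). Then for any cyclically reduced word s₁⋯sₙ in {a^{±1}, b^{±1}}, in the free reduction of θ(s₁)⋯θ(sₙ) no block θ(s_j) has both of its letters cancelled. -/
import Mathlib


/-- The image of a generator letter of `F₂` under `θ`, as a word in the letters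
`ξ₁, ξ₂, ξ₃` (elements of `Fin 3`, with the Bool recording inversion):
`θ(a) = ξ₁ξ₂⁻¹`, `θ(a⁻¹) = ξ₂ξ₁⁻¹`, `θ(b) = ξ₂ξ₃⁻¹`, `θ(b⁻¹) = ξ₃ξ₂⁻¹`. -/
def thetaBlock (s : Fin 2 × Bool) : List (Fin 3 × Bool) :=
  if s.1 = 0 then
    if s.2 then [(0, true), (1, false)] else [(1, true), (0, false)]
  else
    if s.2 then [(1, true), (2, false)] else [(2, true), (1, false)]

/-- A word is cyclically reduced if it is reduced and its first and last letters
are not mutually inverse. -/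
def IsCyclicallyReduced {α : Type*} [DecidableEq α] (L : List (α × Bool)) : Prop :=
  FreeGroup.reduce L = L ∧
    ∀ x ∈ L.head?, ∀ y ∈ L.getLast?, ¬(x.1 = y.1 ∧ x.2 = !y.2)

namespace ThetaAux

open FreeGroup List

/-- computation rule for `FreeGroup.reduce` on a cons, when the reduction of
the tail is known to be a cons. -/
lemma reduce_cons_cons {α : Type*} [DecidableEq α] (x y : α × Bool)
    (t w : List (α × Bool)) (h : FreeGroup.reduce w = y :: t) :
    FreeGroup.reduce (x :: w) = if x.1 = y.1 ∧ x.2 = !y.2 then t else x :: y :: t := by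
  rw [FreeGroup.reduce.cons, h]

lemma reduce_cons_nil {α : Type*} [DecidableEq α] (x : α × Bool)
    (w : List (α × Bool)) (h : FreeGroup.reduce w = []) :
    FreeGroup.reduce (x :: w) = [x] := by
  rw [FreeGroup.reduce.cons, h]

lemma if_bool_false {β : Type*} (a b : β) : (if (false : Bool) = true then a else b) = b := rfl
lemma if_bool_true {β : Type*} (a b : β) : (if (true : Bool) = true then a else b) = a := rfl

/-- first letter of `thetaBlock s` -/
def fstL (s : Fin 2 × Bool) : Fin 3 × Bool :=
  if s.1 = 0 then (if s.2 then (0, true) else (1, true))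
  else (if s.2 then (1, true) else (2, true))

/-- second letter of `thetaBlock s` -/
def sndL (s : Fin 2 × Bool) : Fin 3 × Bool :=
  if s.1 = 0 then (if s.2 then (1, false) else (0, false))
  else (if s.2 then (2, false) else (1, false))

lemma thetaBlock_eq : ∀ s : Fin 2 × Bool, thetaBlock s = [fstL s, sndL s] := by decide

def notinv (x y : Fin 2 × Bool) : Prop := ¬(x.1 = y.1 ∧ x.2 = !y.2)

instance (x y : Fin 2 × Bool) : Decidable (notinv x y) := by unfold notinv; infer_instance

def cancels (s t : Fin 2 × Bool) : Bool := (sndL s).1 == (fstL t).1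

lemma f1 : ∀ s : Fin 2 × Bool,
    (fstL s).2 = true ∧ (sndL s).2 = false ∧ (fstL s).1 ≠ (sndL s).1 := by decide

lemma f2 : ∀ s t : Fin 2 × Bool, notinv s t → cancels s t = true →
    (fstL s).1 ≠ (sndL t).1 := by decide

lemma f3 : ∀ s₀ s t : Fin 2 × Bool, notinv s₀ s → notinv s t →
    cancels s₀ s = true → cancels s t = true → False := by decide

lemma cancels_iff (s t : Fin 2 × Bool) :
    cancels s t = true ↔ (sndL s).1 = (fstL t).1 := by simp [cancels]

def piece (c d : Bool) (s : Fin 2 × Bool) : List (Fin 3 × Bool) :=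
  (if c then [] else [fstL s]) ++ (if d then [] else [sndL s])

def pieces : Bool → List (Fin 2 × Bool) → List (List (Fin 3 × Bool))
  | _, [] => []
  | c, [s] => [piece c false s]
  | c, s :: t :: r => piece c (cancels s t) s :: pieces (cancels s t) (t :: r)

/-- if `reduce L = L` then adjacent letters are not mutually inverse. -/
lemma chain_of_reduce {α : Type*} [DecidableEq α] :
    ∀ {L : List (α × Bool)}, FreeGroup.reduce L = L →
      L.Chain' (fun x y => ¬(x.1 = y.1 ∧ x.2 = !y.2)) := by
  intro L
  induction L with
  | nil => intro _; exact List.isChain_nil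
  | cons x w ih =>
    intro h
    rcases hw : FreeGroup.reduce w with _ | ⟨y, t⟩
    · have h' : [x] = x :: w := by rw [← reduce_cons_nil x w hw, h]
      have : w = [] := by injection h'.symm
      subst this; exact List.isChain_singleton x
    · by_cases hcan : x.1 = y.1 ∧ x.2 = !y.2
      · exfalso
        have h' : t = x :: w := by
          rw [← h, reduce_cons_cons x y t w hw, if_pos hcan]
        have hl : (FreeGroup.reduce w).length ≤ w.length :=
          FreeGroup.Red.length_le FreeGroup.reduce.red
        rw [hw] at hl
        have : t.length = w.length + 1 := by rw [h']; simp
        simp only [List.length_cons] at hl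
        omega
      · have h' : x :: y :: t = x :: w := by
          rw [← h, reduce_cons_cons x y t w hw, if_neg hcan]
        have hweq : w = y :: t := by injection h'.symm
        have hw2 : FreeGroup.reduce w = w := by rw [hw, hweq]
        rw [hweq]
        exact List.IsChain.cons_cons hcan (hweq ▸ ih hw2)

lemma key : ∀ (r : List (Fin 2 × Bool)) (c : Bool) (s : Fin 2 × Bool),
    List.Chain' notinv (s :: r) →
    (c = true → ∃ s₀, notinv s₀ s ∧ cancels s₀ s = true) →
    FreeGroup.reduce ((cond c [sndL s] [fstL s, sndL s]) ++ r.flatMap thetaBlock)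
        = (pieces c (s :: r)).flatten ∧
      ((pieces c (s :: r)).flatten).head? = some (cond c (sndL s) (fstL s)) := by
  intro r
  induction r with
  | nil =>
    intro c s _ _
    cases c with
    | true =>
      refine ⟨?_, by simp [pieces, piece]⟩
      simp only [Bool.cond_true, Bool.cond_false, List.flatMap_nil, List.append_nil, List.singleton_append]
      simp [FreeGroup.reduce_singleton, pieces, piece]
    | false =>
      refine ⟨?_, by simp [pieces, piece]⟩
      simp only [Bool.cond_true, Bool.cond_false, List.flatMap_nil, List.append_nil]
      rw [show ([fstL s, sndL s] : List (Fin 3 × Bool)) = fstL s :: [sndL s] from rfl,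
        reduce_cons_cons (fstL s) (sndL s) [] [sndL s] (FreeGroup.reduce_singleton _),
        if_neg (fun h => (f1 s).2.2 h.1)]
      simp [pieces, piece]
  | cons t r' ih =>
    intro c s hchain hc
    have hst : notinv s t := (List.isChain_cons_cons.mp hchain).1
    have hchain' : List.Chain' notinv (t :: r') := (List.isChain_cons_cons.mp hchain).2
    obtain ⟨hred, hhead⟩ := ih (cancels s t) t hchain' (fun hdt => ⟨s, hst, hdt⟩)
    have hcd : ¬(c = true ∧ cancels s t = true) := by
      rintro ⟨hc1, hd1⟩
      obtain ⟨s₀, h₀, hc₀⟩ := hc hc1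
      exact f3 s₀ s t h₀ hst hc₀ hd1
    have hM : (t :: r').flatMap thetaBlock = fstL t :: sndL t :: r'.flatMap thetaBlock := by
      simp [List.flatMap_cons, thetaBlock_eq]
    have hpieces : pieces c (s :: t :: r')
        = piece c (cancels s t) s :: pieces (cancels s t) (t :: r') := rfl
    cases hdc : cancels s t with
    | true =>
      have hc' : c = false := by
        cases c with
        | false => rfl
        | true => exact absurd ⟨rfl, hdc⟩ hcd
      subst hc'
      rw [hdc] at hred hhead hpieces
      simp only [Bool.cond_true, Bool.cond_false, List.singleton_append] at hred hhead
      obtain ⟨F', hF'⟩ : ∃ F', (pieces true (t :: r')).flatten = sndL t :: F' := by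
        cases hFe : (pieces true (t :: r')).flatten with
        | nil => rw [hFe] at hhead; simp at hhead
        | cons a b =>
          rw [hFe] at hhead
          simp only [List.head?_cons, Option.some.injEq] at hhead
          exact ⟨b, by rw [hhead]⟩
      rw [hF'] at hred
      have h1 : FreeGroup.reduce (fstL t :: sndL t :: r'.flatMap thetaBlock)
          = fstL t :: sndL t :: F' := by
        rw [reduce_cons_cons _ _ _ _ hred, if_neg (fun h => (f1 t).2.2 h.1)]
      have h2 : FreeGroup.reduce (sndL s :: fstL t :: sndL t :: r'.flatMap thetaBlock)
          = sndL t :: F' := by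
        rw [reduce_cons_cons _ _ _ _ h1, if_pos]
        refine ⟨(cancels_iff s t).mp hdc, ?_⟩
        rw [(f1 s).2.1, (f1 t).1]; rfl
      have h3 : FreeGroup.reduce (fstL s :: sndL s :: fstL t :: sndL t :: r'.flatMap thetaBlock)
          = fstL s :: sndL t :: F' := by
        rw [reduce_cons_cons _ _ _ _ h2, if_neg (fun h => f2 s t hst hdc h.1)]
      constructor
      · simp only [Bool.cond_true, Bool.cond_false, hM, List.cons_append, List.nil_append]
        rw [h3, hpieces, List.flatten_cons, hF']
        simp [piece]
      · rw [hpieces]; simp [piece]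
    | false =>
      rw [hdc] at hred hhead hpieces
      simp only [Bool.cond_true, Bool.cond_false, List.cons_append, List.nil_append] at hred hhead
      obtain ⟨F', hF'⟩ : ∃ F', (pieces false (t :: r')).flatten = fstL t :: F' := by
        cases hFe : (pieces false (t :: r')).flatten with
        | nil => rw [hFe] at hhead; simp at hhead
        | cons a b =>
          rw [hFe] at hhead
          simp only [List.head?_cons, Option.some.injEq] at hhead
          exact ⟨b, by rw [hhead]⟩
      rw [hF'] at hred
      have h2 : FreeGroup.reduce (sndL s :: fstL t :: sndL t :: r'.flatMap thetaBlock)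
          = sndL s :: fstL t :: F' := by
        rw [reduce_cons_cons _ _ _ _ hred, if_neg]
        intro h
        exact absurd ((cancels_iff s t).mpr h.1) (by rw [hdc]; simp)
      have h3 : FreeGroup.reduce (fstL s :: sndL s :: fstL t :: sndL t :: r'.flatMap thetaBlock)
          = fstL s :: sndL s :: fstL t :: F' := by
        rw [reduce_cons_cons _ _ _ _ h2, if_neg (fun h => (f1 s).2.2 h.1)]
      cases c with
      | false =>
        constructor
        · simp only [Bool.cond_true, Bool.cond_false, hM, List.cons_append, List.nil_append]
          rw [h3, hpieces, List.flatten_cons, hF']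
          simp [piece]
        · rw [hpieces]; simp [piece]
      | true =>
        constructor
        · simp only [Bool.cond_true, Bool.cond_false, hM, List.singleton_append]
          rw [h2, hpieces, List.flatten_cons, hF']
          simp [piece]
        · rw [hpieces]; simp [piece]

lemma piece_infix (c d : Bool) (s : Fin 2 × Bool) : piece c d s <:+: thetaBlock s := by
  rw [thetaBlock_eq]
  cases c <;> cases d <;> simp only [piece, List.nil_append, List.append_nil,
    Bool.cond_true, Bool.cond_false, if_true, if_false, cond]
  · exact List.infix_refl _
  · exact ⟨[], [sndL s], by simp⟩
  · exact ⟨[fstL s], [], by simp⟩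
  · exact List.nil_infix

lemma forall2 : ∀ (r : List (Fin 2 × Bool)) (c : Bool) (s : Fin 2 × Bool),
    List.Chain' notinv (s :: r) →
    (c = true → ∃ s₀, notinv s₀ s ∧ cancels s₀ s = true) →
    List.Forall₂ (fun w s => w ≠ [] ∧ w <:+: thetaBlock s) (pieces c (s :: r)) (s :: r) := by
  intro r
  induction r with
  | nil =>
    intro c s _ _
    refine List.Forall₂.cons ⟨?_, piece_infix c false s⟩ List.Forall₂.nil
    cases c <;> simp [piece]
  | cons t r' ih =>
    intro c s hchain hc
    have hst : notinv s t := (List.isChain_cons_cons.mp hchain).1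
    have hchain' : List.Chain' notinv (t :: r') := (List.isChain_cons_cons.mp hchain).2
    have hcd : ¬(c = true ∧ cancels s t = true) := by
      rintro ⟨hc1, hd1⟩
      obtain ⟨s₀, h₀, hc₀⟩ := hc hc1
      exact f3 s₀ s t h₀ hst hc₀ hd1
    refine List.Forall₂.cons ⟨?_, piece_infix c (cancels s t) s⟩
      (ih (cancels s t) t hchain' (fun hdt => ⟨s, hst, hdt⟩))
    cases c with
    | false => simp [piece]
    | true =>
      have hd0 : cancels s t = false := by
        cases h : cancels s t with
        | false => rfl
        | true => exact absurd ⟨rfl, h⟩ hcd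
      simp [piece, hd0]

end ThetaAux

/-- In the free reduction of `θ(s₁)⋯θ(sₙ)` for a cyclically reduced word `s₁⋯sₙ`,
no block `θ(sⱼ)` has both of its letters cancelled: the reduced word is a
concatenation of nonempty contiguous pieces, one from each block. -/
theorem theta_no_block_fully_cancelled (L : List (Fin 2 × Bool))
    (hL : IsCyclicallyReduced L) :
    ∃ ws : List (List (Fin 3 × Bool)),
      (FreeGroup.mk (L.flatMap thetaBlock)).toWord = ws.flatten ∧
      List.Forall₂ (fun w s => w ≠ [] ∧ w <:+: thetaBlock s) ws L := by
  cases L with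
  | nil =>
    exact ⟨[], by simp [FreeGroup.toWord_mk], List.Forall₂.nil⟩
  | cons s r =>
    have hchain : List.Chain' ThetaAux.notinv (s :: r) :=
      ThetaAux.chain_of_reduce hL.1
    have hc : (false : Bool) = true → ∃ s₀, ThetaAux.notinv s₀ s ∧ ThetaAux.cancels s₀ s = true :=
      fun h => by simp at h
    obtain ⟨h1, _⟩ := ThetaAux.key r false s hchain hc
    refine ⟨ThetaAux.pieces false (s :: r), ?_, ThetaAux.forall2 r false s hchain hc⟩
    rw [FreeGroup.toWord_mk, ← h1]
    simp [List.flatMap_cons, ThetaAux.thetaBlock_eq]
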